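/- Let Σ = {1,…,d}, let p : Σ* → Δ(Σ) be a language model (a map from finite token sequences to probability vectors on Σ), let κ be a valid selection kernel, let n ≥ 1 and δ ∈ (0,1/4). Let ℙ₀ be the law of (U_1,A_1,…,U_n,A_n) where (U_t)_{t=1}^n are i.i.d. uniform on [0,1], independent of (A_t)_{t=1}^n, and A_t has conditional law p(·|A_1,…,A_{t−1}); let ℙ₁ be the law of (U_1,A_1,…,U_n,A_n) where (U_t) are i.i.d. uniform on [0,1] and A_t is sampled from κ(·|U_t, P_t) with P_t = p(·|A_1,…,A_{t−1}). Suppose T is a measurable {0,1}-valued function of (U_1,A_1,…,U_n,A_n) with ℙ₀(T = 0) ≥ 1 − δ and ℙ₁(T = 1) ≥ 1 − δ. Then E_{ℙ₁}[ Σ_{t=1}^n H(P_t) ] ≥ log(1/(4δ)); equivalently, n ≥ log(1/(4δ)) / E[H̄] where H̄ = (1/n) Σ_{t=1}^n H(P_t). -/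

import Mathlib

open MeasureTheory ProbabilityTheory

section Helpers
variable {Ω : Type*} {mΩ : MeasurableSpace Ω} {μ : Measure Ω}

lemma wm_indep_mono {m₁ m₂ m₁' m₂' : MeasurableSpace Ω}
    (h : Indep m₁ m₂ μ) (h1 : m₁' ≤ m₁) (h2 : m₂' ≤ m₂) : Indep m₁' m₂' μ := by
  rw [Indep_iff] at h ⊢
  exact fun t1 t2 ht1 ht2 => h t1 t2 (h1 _ ht1) (h2 _ ht2)

lemma wm_indepFun_of_indep {β γ : Type*} [mβ : MeasurableSpace β] [mγ : MeasurableSpace γ]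
    {m₁ m₂ : MeasurableSpace Ω} (h : Indep m₁ m₂ μ)
    {f : Ω → β} {g : Ω → γ} (hf : Measurable[m₁] f) (hg : Measurable[m₂] g) :
    IndepFun f g μ := by
  rw [IndepFun_iff_Indep]
  exact wm_indep_mono h (measurable_iff_comap_le.mp hf) (measurable_iff_comap_le.mp hg)

lemma wm_integrable_of_bdd [IsFiniteMeasure μ] {f : Ω → ℝ} {C : ℝ}
    (hm : AEStronglyMeasurable f μ) (h : ∀ ω, |f ω| ≤ C) : Integrable f μ :=
  (integrable_const C).mono' hm (Filter.Eventually.of_forall fun ω => by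
    simpa [Real.norm_eq_abs] using h ω)

lemma wm_integral_prod_iid {ι : Type*} [IsProbabilityMeasure μ] {Y : ι → Ω → ℝ}
    (h : iIndepFun Y μ) (hm : ∀ i, Measurable (Y i))
    (hint : ∀ i, Integrable (Y i) μ) (s : Finset ι) :
    (Integrable (fun ω => ∏ i ∈ s, Y i ω) μ) ∧
      ∫ ω, ∏ i ∈ s, Y i ω ∂μ = ∏ i ∈ s, ∫ ω, Y i ω ∂μ := by
  classical
  induction s using Finset.induction_on with
  | empty => simp
  | @insert i s hi ih =>
      have hind : IndepFun (Y i) (∏ j ∈ s, Y j) μ :=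
        (iIndepFun.indepFun_finset_prod_of_notMem h hm hi).symm
      have hps : (fun ω => ∏ j ∈ s, Y j ω) = ∏ j ∈ s, Y j := by
        funext ω; simp
      constructor
      · have := hind.integrable_mul (hint i) (hps ▸ ih.1)
        simp only [Finset.prod_insert hi]
        convert this using 1
        funext ω; simp
      · rw [Finset.prod_insert hi, ← ih.2]
        have := hind.integral_mul_eq_mul_integral (hint i).1 (hps ▸ ih.1).1
        simp only [Finset.prod_insert hi]
        convert this using 1
        · congr 1; funext ω; simp
        · rw [hps]

lemma wm_integral_eq_sum_fiber {γ : Type*} [Fintype γ] [MeasurableSpace γ]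
    [MeasurableSingletonClass γ] [IsFiniteMeasure μ]
    {V : Ω → γ} (hV : Measurable V) (f : Ω → ℝ) (hf : Integrable f μ) :
    ∫ ω, f ω ∂μ = ∑ v, ∫ ω in V ⁻¹' {v}, f ω ∂μ := by
  classical
  have : ∫ ω, f ω ∂μ = ∫ ω in ⋃ v : γ, V ⁻¹' {v}, f ω ∂μ := by
    rw [show (⋃ v : γ, V ⁻¹' {v}) = Set.univ by ext ω; simp]
    simp
  rw [this, integral_iUnion_fintype (fun v => hV (measurableSet_singleton v))
    (fun v v' hvv' => Set.disjoint_left.mpr (by simp; intro ω h1 h2; exact hvv' (h1 ▸ h2.symm ▸ rfl)))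
    (fun v => hf.integrableOn)]

lemma wm_numeric {δ : ℝ} (h1 : 0 < δ) (h2 : δ < 1/4) :
    Real.log (1/(4*δ)) ≤ (1-δ) * (Real.log (1-δ) - Real.log δ) := by
  have hδ1 : δ < 1 := by linarith
  have hlog4 : Real.log (1/(4*δ)) = -(Real.log 4) - Real.log δ := by
    rw [one_div, Real.log_inv, Real.log_mul (by norm_num) h1.ne']
    ring
  have f1 : (1-δ) * Real.log (1-δ) ≥ -δ := by
    have h1δ : (0:ℝ) < 1 - δ := by linarith
    have := Real.log_le_sub_one_of_pos (x := (1-δ)⁻¹) (by positivity)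
    rw [Real.log_inv] at this
    have hle : Real.log (1-δ) ≥ 1 - (1-δ)⁻¹ := by linarith
    have : (1-δ) * Real.log (1-δ) ≥ (1-δ) * (1 - (1-δ)⁻¹) :=
      mul_le_mul_of_nonneg_left hle (by linarith)
    calc (1-δ) * Real.log (1-δ) ≥ (1-δ) * (1 - (1-δ)⁻¹) := this
      _ = -δ := by field_simp; ring
  have f2 : δ * Real.log δ ≥ -1 := by
    have hs : (0:ℝ) < Real.sqrt δ := Real.sqrt_pos.mpr h1
    have hlogs := Real.log_le_sub_one_of_pos (x := (Real.sqrt δ)⁻¹) (by positivity)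
    rw [Real.log_inv, Real.log_sqrt h1.le] at hlogs
    have h3 : -(Real.log δ) ≤ 2 / Real.sqrt δ := by
      rw [div_eq_mul_inv]
      nlinarith [hlogs, hs, mul_pos hs (inv_pos.mpr hs), mul_inv_cancel₀ hs.ne']
    have h4 : δ * (-(Real.log δ)) ≤ δ * (2 / Real.sqrt δ) :=
      mul_le_mul_of_nonneg_left h3 h1.le
    have h5 : δ * (2 / Real.sqrt δ) = 2 * Real.sqrt δ := by
      rw [mul_div_assoc']
      rw [show δ * 2 = 2 * δ by ring, mul_div_assoc, Real.div_sqrt]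
    have h6 : Real.sqrt δ ≤ 1/2 := by
      have : Real.sqrt δ ≤ Real.sqrt (1/4) := Real.sqrt_le_sqrt (by linarith)
      rwa [show (1/4 : ℝ) = (1/2)^2 by norm_num, Real.sqrt_sq (by norm_num)] at this
    nlinarith
  have f3 : (1.25 : ℝ) ≤ Real.log 4 := by
    have h2' := Real.log_two_gt_d9
    have : Real.log 4 = 2 * Real.log 2 := by
      rw [show (4:ℝ) = 2^2 by norm_num, Real.log_pow]; push_cast; ring
    nlinarith
  rw [hlog4]
  nlinarith [f1, f2, f3, h2]

end Helpers

theorem watermark_lower_bound_entropy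
    {d n : ℕ} (hd : 0 < d) (hn : 1 ≤ n) (δ : ℝ) (hδ : δ ∈ Set.Ioo (0:ℝ) (1/4))
    (LM : List (Fin d) → Fin d → ℝ)
    (hLM_nonneg : ∀ s a, 0 ≤ LM s a) (hLM_sum : ∀ s, ∑ a, LM s a = 1)
    (κ : ℝ → (Fin d → ℝ) → Fin d → ℝ)
    (hκ_meas : Measurable fun x : ℝ × (Fin d → ℝ) => κ x.1 x.2)
    (hκ_nonneg : ∀ u p a, 0 ≤ κ u p a) (hκ_sum : ∀ u p, ∑ a, κ u p a = 1)
    (hκ_valid : ∀ p : Fin d → ℝ, (∀ a, 0 ≤ p a) → ∑ a, p a = 1 →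
      ∀ a, (∫ u in (0:ℝ)..1, κ u p a) = p a)
    {Ω : Type*} {m0 : MeasurableSpace Ω}
    (μ0 μ1 : Measure Ω) [IsProbabilityMeasure μ0] [IsProbabilityMeasure μ1]
    (U : Fin n → Ω → ℝ) (A : Fin n → Ω → Fin d)
    (hU_meas : ∀ t, Measurable (U t)) (hA_meas : ∀ t, Measurable (A t))
    -- histories `A_1,…,A_{t−1}`
    (hist : Fin n → Ω → List (Fin d))
    (hhist : ∀ t ω, hist t ω =
      List.ofFn fun s : Fin t.val => A ⟨s.val, s.isLt.trans t.isLt⟩ ω)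
    -- σ-algebras of the past
    (past pastA : Fin n → MeasurableSpace Ω)
    (hpast : ∀ t, past t = ⨆ s : Fin n, ⨆ _ : s.val < t.val,
      (MeasurableSpace.comap (U s) inferInstance ⊔
        MeasurableSpace.comap (A s) inferInstance))
    (hpastA : ∀ t, pastA t = ⨆ s : Fin n, ⨆ _ : s.val < t.val,
      MeasurableSpace.comap (A s) inferInstance)
    -- null hypothesis: (U_t) i.i.d. uniform, independent of (A_t); A_t ∼ LM(hist)
    (h0U_indep : iIndepFun U μ0)
    (h0U_unif : ∀ t, Measure.map (U t) μ0 = volume.restrict (Set.Icc (0:ℝ) 1))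
    (h0_indep : IndepFun (fun ω t => U t ω) (fun ω t => A t ω) μ0)
    (h0A_cond : ∀ t a, (μ0[(fun ω => if A t ω = a then (1:ℝ) else 0) | pastA t])
      =ᵐ[μ0] fun ω => LM (hist t ω) a)
    -- alternative: U_t uniform, independent of the past; A_t ∼ κ(·|U_t, P_t)
    (h1U_unif : ∀ t, Measure.map (U t) μ1 = volume.restrict (Set.Icc (0:ℝ) 1))
    (h1U_indep : ∀ t, Indep (MeasurableSpace.comap (U t) inferInstance) (past t) μ1)
    (h1A_cond : ∀ t a,
      (μ1[(fun ω => if A t ω = a then (1:ℝ) else 0) |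
          past t ⊔ MeasurableSpace.comap (U t) inferInstance])
        =ᵐ[μ1] fun ω => κ (U t ω) (LM (hist t ω)) a)
    -- the test
    (T : Ω → Bool)
    (hT_meas : Measurable[⨆ s : Fin n,
      (MeasurableSpace.comap (U s) inferInstance ⊔
        MeasurableSpace.comap (A s) inferInstance)] T)
    (hT0 : ENNReal.ofReal (1 - δ) ≤ μ0 {ω | T ω = false})
    (hT1 : ENNReal.ofReal (1 - δ) ≤ μ1 {ω | T ω = true}) :
    Real.log (1/(4*δ)) ≤
      ∫ ω, ∑ t, ∑ a, Real.negMulLog (LM (hist t ω) a) ∂μ1 := by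
  classical
  obtain ⟨hδ0, hδ4⟩ := hδ
  -- the uniform measure on [0,1]
  set lI : Measure ℝ := volume.restrict (Set.Icc (0:ℝ) 1) with hlI
  haveI : IsProbabilityMeasure lI := ⟨by
    rw [hlI, Measure.restrict_apply_univ]
    simp [Real.volume_Icc]⟩
  -- σ-algebra plumbing
  have hcU : ∀ s : Fin n, MeasurableSpace.comap (U s) inferInstance ≤ m0 :=
    fun s => measurable_iff_comap_le.mp (hU_meas s)
  have hcA : ∀ s : Fin n, MeasurableSpace.comap (A s) inferInstance ≤ m0 :=
    fun s => measurable_iff_comap_le.mp (hA_meas s)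
  have hpast_le : ∀ t, past t ≤ m0 := fun t => by
    rw [hpast]
    exact iSup_le fun s => iSup_le fun _ => sup_le (hcU s) (hcA s)
  have hpastA_le : ∀ t, pastA t ≤ m0 := fun t => by
    rw [hpastA]
    exact iSup_le fun s => iSup_le fun _ => hcA s
  have hUpast : ∀ t s : Fin n, s.val < t.val →
      MeasurableSpace.comap (U s) inferInstance ≤ past t := fun t s hs => by
    rw [hpast]
    exact le_iSup_of_le s (le_iSup_of_le hs le_sup_left)
  have hApast : ∀ t s : Fin n, s.val < t.val →
      MeasurableSpace.comap (A s) inferInstance ≤ past t := fun t s hs => by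
    rw [hpast]
    exact le_iSup_of_le s (le_iSup_of_le hs le_sup_right)
  have hApastA : ∀ t s : Fin n, s.val < t.val →
      MeasurableSpace.comap (A s) inferInstance ≤ pastA t := fun t s hs => by
    rw [hpastA]
    exact le_iSup_of_le s (le_iSup_of_le hs le_rfl)
  have hA_past_meas : ∀ t s : Fin n, s.val < t.val → Measurable[past t] (A s) :=
    fun t s hs => measurable_iff_comap_le.mpr (hApast t s hs)
  have hU_past_meas : ∀ t s : Fin n, s.val < t.val → Measurable[past t] (U s) :=
    fun t s hs => measurable_iff_comap_le.mpr (hUpast t s hs)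
  have hA_pastA_meas : ∀ t s : Fin n, s.val < t.val → Measurable[pastA t] (A s) :=
    fun t s hs => measurable_iff_comap_le.mpr (hApastA t s hs)
  -- canonical history vector
  have hav : ∀ (t : Fin n) (ω : Ω), hist t ω =
      List.ofFn (fun s : Fin t.val => A ⟨s.val, s.isLt.trans t.isLt⟩ ω) := hhist
  -- bounds on LM and κ
  have hLM_le1 : ∀ l b, LM l b ≤ 1 := by
    intro l b
    rw [← hLM_sum l]
    exact Finset.single_le_sum (fun a _ => hLM_nonneg l a) (Finset.mem_univ b)
  have hκ_le1 : ∀ u p b, κ u p b ≤ 1 := by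
    intro u p b
    rw [← hκ_sum u p]
    exact Finset.single_le_sum (fun a _ => hκ_nonneg u p a) (Finset.mem_univ b)
  -- measurability of u ↦ κ u p b
  have hκu_meas : ∀ (p : Fin d → ℝ) (b : Fin d), Measurable (fun u => κ u p b) := by
    intro p b
    exact ((measurable_pi_apply b).comp hκ_meas).comp (measurable_id.prodMk measurable_const)
  -- the validity of κ over lI
  have hκ_int : ∀ (l : List (Fin d)) (b : Fin d), ∫ u, κ u (LM l) b ∂lI = LM l b := by
    intro l b
    rw [hlI, MeasureTheory.integral_Icc_eq_integral_Ioc,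
      ← intervalIntegral.integral_of_le (zero_le_one)]
    exact hκ_valid (LM l) (hLM_nonneg l) (hLM_sum l) b
  -- the fundamental one-step computation under μ1
  have step1 : ∀ (t : Fin n) (D : Set Ω) (l : List (Fin d)) (B : Set ℝ) (b : Fin d),
      MeasurableSet[past t] D → (∀ ω ∈ D, hist t ω = l) → MeasurableSet B →
      (μ1 (D ∩ ((U t) ⁻¹' B ∩ (A t) ⁻¹' {b}))).toReal
        = (μ1 D).toReal * ∫ u, B.indicator (fun u => κ u (LM l) b) u ∂lI := by
    intro t D l B b hD hDl hB
    have hGt_le : past t ⊔ MeasurableSpace.comap (U t) inferInstance ≤ m0 :=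
      sup_le (hpast_le t) (hcU t)
    have hDm0 : MeasurableSet D := hpast_le t D hD
    have hUB : MeasurableSet ((U t) ⁻¹' B) := (hU_meas t) hB
    have hSm0 : MeasurableSet (D ∩ (U t) ⁻¹' B) := hDm0.inter hUB
    have hSGt : MeasurableSet[past t ⊔ MeasurableSpace.comap (U t) inferInstance]
        (D ∩ (U t) ⁻¹' B) := by
      refine MeasurableSet.inter ?_ ?_
      · exact (le_sup_left : past t ≤ _) D hD
      · exact (le_sup_right : MeasurableSpace.comap (U t) inferInstance ≤ _) _ ⟨B, hB, rfl⟩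
    have hχ_meas : Measurable (fun ω => if A t ω = b then (1:ℝ) else 0) := by
      have : MeasurableSet {ω | A t ω = b} := (hA_meas t) (measurableSet_singleton b)
      exact Measurable.ite this measurable_const measurable_const
    have hχ_int : Integrable (fun ω => if A t ω = b then (1:ℝ) else 0) μ1 :=
      wm_integrable_of_bdd (C := 1) hχ_meas.aestronglyMeasurable (fun ω => by
        by_cases h : A t ω = b <;> simp [h])
    -- the measure as an integral of the indicator
    have e1 : (μ1 (D ∩ ((U t) ⁻¹' B ∩ (A t) ⁻¹' {b}))).toReal
        = ∫ ω in D ∩ (U t) ⁻¹' B, (if A t ω = b then (1:ℝ) else 0) ∂μ1 := by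
      have : (fun ω => if A t ω = b then (1:ℝ) else 0)
          = Set.indicator ((A t) ⁻¹' {b}) (fun _ => (1:ℝ)) := by
        funext ω
        by_cases h : A t ω = b <;> simp [Set.indicator_apply, h]
      rw [this, setIntegral_indicator ((hA_meas t) (measurableSet_singleton b)),
        setIntegral_const, ← Set.inter_assoc]
      simp
      rfl
    -- apply the conditional law
    have e2 : ∫ ω in D ∩ (U t) ⁻¹' B, (if A t ω = b then (1:ℝ) else 0) ∂μ1
        = ∫ ω in D ∩ (U t) ⁻¹' B, κ (U t ω) (LM (hist t ω)) b ∂μ1 := by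
      rw [← setIntegral_condExp hGt_le hχ_int hSGt]
      exact setIntegral_congr_ae hSm0 ((h1A_cond t b).mono fun ω h _ => h)
    -- replace hist by the constant list l, and rewrite as a product
    have e3 : ∫ ω in D ∩ (U t) ⁻¹' B, κ (U t ω) (LM (hist t ω)) b ∂μ1
        = ∫ ω, (D.indicator (fun _ => (1:ℝ)) ω) *
            (B.indicator (fun u => κ u (LM l) b) (U t ω)) ∂μ1 := by
      rw [← integral_indicator hSm0]
      congr 1
      funext ω
      by_cases hωD : ω ∈ D
      · by_cases hωB : U t ω ∈ B
        · rw [Set.indicator_of_mem (Set.mem_inter hωD hωB), Set.indicator_of_mem hωD,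
            Set.indicator_of_mem hωB, hDl ω hωD, one_mul]
        · rw [Set.indicator_of_notMem (fun h => hωB h.2), Set.indicator_of_notMem hωB,
            mul_zero]
      · rw [Set.indicator_of_notMem (fun h => hωD h.1), Set.indicator_of_notMem hωD,
          zero_mul]
    -- independence of U t from the past
    have hκlb_meas : Measurable (fun u => B.indicator (fun u => κ u (LM l) b) u) :=
      (hκu_meas (LM l) b).indicator hB
    have hIndep : IndepFun (fun ω => D.indicator (fun _ => (1:ℝ)) ω)
        (fun ω => B.indicator (fun u => κ u (LM l) b) (U t ω)) μ1 := by
      refine wm_indepFun_of_indep (h1U_indep t).symm ?_ ?_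
      · exact (measurable_const (a := (1:ℝ))).indicator hD
      · exact hκlb_meas.comp (measurable_iff_comap_le.mpr le_rfl)
    have hint1 : Integrable (fun ω => D.indicator (fun _ => (1:ℝ)) ω) μ1 :=
      wm_integrable_of_bdd (C := 1) ((measurable_const (a := (1:ℝ))).indicator hDm0).aestronglyMeasurable
        (fun ω => by by_cases h : ω ∈ D <;> simp [Set.indicator_apply, h])
    have hint2 : Integrable (fun ω => B.indicator (fun u => κ u (LM l) b) (U t ω)) μ1 :=
      wm_integrable_of_bdd (C := 1) (hκlb_meas.comp (hU_meas t)).aestronglyMeasurable (fun ω => by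
        by_cases h : U t ω ∈ B
        · rw [Set.indicator_of_mem h, abs_of_nonneg (hκ_nonneg _ _ _)]
          exact hκ_le1 _ _ _
        · simp [Set.indicator_of_notMem h])
    have e4 : ∫ ω, (D.indicator (fun _ => (1:ℝ)) ω) *
          (B.indicator (fun u => κ u (LM l) b) (U t ω)) ∂μ1
        = (∫ ω, D.indicator (fun _ => (1:ℝ)) ω ∂μ1) *
          ∫ ω, B.indicator (fun u => κ u (LM l) b) (U t ω) ∂μ1 :=
      hIndep.integral_fun_mul_eq_mul_integral hint1.1 hint2.1
    have e5 : ∫ ω, D.indicator (fun _ => (1:ℝ)) ω ∂μ1 = (μ1 D).toReal := by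
      rw [integral_indicator hDm0]; simp; rfl
    have e6 : ∫ ω, B.indicator (fun u => κ u (LM l) b) (U t ω) ∂μ1
        = ∫ u, B.indicator (fun u => κ u (LM l) b) u ∂lI := by
      rw [← h1U_unif t]
      exact (integral_map (hU_meas t).aemeasurable hκlb_meas.aestronglyMeasurable).symm
    rw [e1, e2, e3, e4, e5, e6]
  -- the fundamental one-step computation under μ0
  have step0 : ∀ (t : Fin n) (D : Set Ω) (l : List (Fin d)) (b : Fin d),
      MeasurableSet[pastA t] D → (∀ ω ∈ D, hist t ω = l) →
      (μ0 (D ∩ (A t) ⁻¹' {b})).toReal = (μ0 D).toReal * LM l b := by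
    intro t D l b hD hDl
    have hDm0 : MeasurableSet D := hpastA_le t D hD
    have hχ_meas : Measurable (fun ω => if A t ω = b then (1:ℝ) else 0) := by
      have : MeasurableSet {ω | A t ω = b} := (hA_meas t) (measurableSet_singleton b)
      exact Measurable.ite this measurable_const measurable_const
    have hχ_int : Integrable (fun ω => if A t ω = b then (1:ℝ) else 0) μ0 :=
      wm_integrable_of_bdd (C := 1) hχ_meas.aestronglyMeasurable (fun ω => by
        by_cases h : A t ω = b <;> simp [h])
    have e1 : (μ0 (D ∩ (A t) ⁻¹' {b})).toReal
        = ∫ ω in D, (if A t ω = b then (1:ℝ) else 0) ∂μ0 := by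
      have : (fun ω => if A t ω = b then (1:ℝ) else 0)
          = Set.indicator ((A t) ⁻¹' {b}) (fun _ => (1:ℝ)) := by
        funext ω
        by_cases h : A t ω = b <;> simp [Set.indicator_apply, h]
      rw [this, setIntegral_indicator ((hA_meas t) (measurableSet_singleton b)),
        setIntegral_const]
      simp
      rfl
    have e2 : ∫ ω in D, (if A t ω = b then (1:ℝ) else 0) ∂μ0
        = ∫ ω in D, LM (hist t ω) b ∂μ0 := by
      rw [← setIntegral_condExp (hpastA_le t) hχ_int hD]
      exact setIntegral_congr_ae hDm0 ((h0A_cond t b).mono fun ω h _ => h)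
    have e3 : ∫ ω in D, LM (hist t ω) b ∂μ0 = (μ0 D).toReal * LM l b := by
      rw [setIntegral_congr_fun hDm0 (g := fun _ => LM l b)
        (fun ω hω => by rw [hDl ω hω]), setIntegral_const, measureReal_def, smul_eq_mul]
    rw [e1, e2, e3]
  -- rectangle probabilities under μ1
  have rect1 : ∀ (B : Fin n → Set ℝ), (∀ s, MeasurableSet (B s)) →
      ∀ (a : Fin n → Fin d) (t : ℕ), t ≤ n →
      (μ1 {ω | ∀ s : Fin n, s.val < t → (U s ω ∈ B s ∧ A s ω = a s)}).toReal
        = ∏ s ∈ Finset.univ.filter (fun s : Fin n => s.val < t),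
            ∫ u, (B s).indicator (fun u => κ u
              (LM (List.ofFn (fun i : Fin s.val => a ⟨i.val, i.isLt.trans s.isLt⟩))) (a s)) u ∂lI := by
    intro B hB a t
    induction t with
    | zero =>
        intro _
        have h1 : {ω : Ω | ∀ s : Fin n, s.val < 0 → (U s ω ∈ B s ∧ A s ω = a s)} = Set.univ := by
          ext ω; simp
        have h2 : Finset.univ.filter (fun s : Fin n => s.val < 0) = ∅ := by
          ext s; simp
        rw [h1, h2]
        simp
    | succ t ih =>
        intro ht
        have htn : t < n := lt_of_lt_of_le (Nat.lt_succ_self t) ht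
        set tn : Fin n := ⟨t, htn⟩ with htn_def
        set Dt : Set Ω := {ω | ∀ s : Fin n, s.val < t → (U s ω ∈ B s ∧ A s ω = a s)} with hDt_def
        have hset : {ω : Ω | ∀ s : Fin n, s.val < t + 1 → (U s ω ∈ B s ∧ A s ω = a s)}
            = Dt ∩ ((U tn) ⁻¹' (B tn) ∩ (A tn) ⁻¹' {a tn}) := by
          ext ω
          constructor
          · intro h
            exact ⟨fun s hs => h s (Nat.lt_succ_of_lt hs),
              (h tn (Nat.lt_succ_self t)).1, (h tn (Nat.lt_succ_self t)).2⟩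
          · rintro ⟨h1, h2, h3⟩ s hs
            rcases Nat.lt_succ_iff_lt_or_eq.mp hs with hs' | hs'
            · exact h1 s hs'
            · have : s = tn := Fin.ext hs'
              subst this
              exact ⟨h2, h3⟩
        have hDt_past : MeasurableSet[past tn] Dt := by
          have : Dt = ⋂ s : Fin n, {ω | s.val < t → (U s ω ∈ B s ∧ A s ω = a s)} := by
            ext ω; simp [hDt_def, Set.mem_iInter]
          rw [this]
          refine MeasurableSet.iInter fun s => ?_
          by_cases hs : s.val < t
          · have heq : {ω : Ω | s.val < t → (U s ω ∈ B s ∧ A s ω = a s)}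
                = (U s) ⁻¹' (B s) ∩ (A s) ⁻¹' {a s} := by
              ext ω; simp [hs]
            rw [heq]
            exact MeasurableSet.inter (hUpast tn s hs _ ⟨B s, hB s, rfl⟩)
              (hApast tn s hs _ ⟨{a s}, measurableSet_singleton _, rfl⟩)
          · have heq : {ω : Ω | s.val < t → (U s ω ∈ B s ∧ A s ω = a s)} = Set.univ := by
              ext ω; simp [hs]
            rw [heq]
            exact MeasurableSet.univ
        have hDl : ∀ ω ∈ Dt, hist tn ω
            = List.ofFn (fun i : Fin tn.val => a ⟨i.val, i.isLt.trans tn.isLt⟩) := by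
          intro ω hω
          rw [hhist]
          exact congrArg List.ofFn (funext fun i => (hω ⟨i.val, i.isLt.trans tn.isLt⟩ i.isLt).2)
        have hfil : Finset.univ.filter (fun s : Fin n => s.val < t + 1)
            = insert tn (Finset.univ.filter (fun s : Fin n => s.val < t)) := by
          ext s
          simp only [Finset.mem_filter, Finset.mem_insert, Finset.mem_univ, true_and]
          constructor
          · intro h
            rcases Nat.lt_succ_iff_lt_or_eq.mp h with h' | h'
            · exact Or.inr h'
            · exact Or.inl (Fin.ext h')
          · rintro (h | h)
            · subst h; exact Nat.lt_succ_self t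
            · exact Nat.lt_succ_of_lt h
        have htn_nmem : tn ∉ Finset.univ.filter (fun s : Fin n => s.val < t) := by
          simp [Finset.mem_filter, htn_def]
        rw [hset, step1 tn Dt _ (B tn) (a tn) hDt_past hDl (hB tn),
          ih (le_of_lt (Nat.lt_of_succ_le ht)), hfil, Finset.prod_insert htn_nmem]
        ring
  -- A-marginal probabilities under μ0
  have rect0 : ∀ (a : Fin n → Fin d) (t : ℕ), t ≤ n →
      (μ0 {ω | ∀ s : Fin n, s.val < t → A s ω = a s}).toReal
        = ∏ s ∈ Finset.univ.filter (fun s : Fin n => s.val < t),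
            LM (List.ofFn (fun i : Fin s.val => a ⟨i.val, i.isLt.trans s.isLt⟩)) (a s) := by
    intro a t
    induction t with
    | zero =>
        intro _
        have h1 : {ω : Ω | ∀ s : Fin n, s.val < 0 → A s ω = a s} = Set.univ := by
          ext ω; simp
        have h2 : Finset.univ.filter (fun s : Fin n => s.val < 0) = ∅ := by
          ext s; simp
        rw [h1, h2]
        simp
    | succ t ih =>
        intro ht
        have htn : t < n := lt_of_lt_of_le (Nat.lt_succ_self t) ht
        set tn : Fin n := ⟨t, htn⟩ with htn_def
        set Dt : Set Ω := {ω | ∀ s : Fin n, s.val < t → A s ω = a s} with hDt_def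
        have hset : {ω : Ω | ∀ s : Fin n, s.val < t + 1 → A s ω = a s}
            = Dt ∩ (A tn) ⁻¹' {a tn} := by
          ext ω
          constructor
          · intro h
            exact ⟨fun s hs => h s (Nat.lt_succ_of_lt hs), h tn (Nat.lt_succ_self t)⟩
          · rintro ⟨h1, h2⟩ s hs
            rcases Nat.lt_succ_iff_lt_or_eq.mp hs with hs' | hs'
            · exact h1 s hs'
            · have : s = tn := Fin.ext hs'
              subst this
              exact h2
        have hDt_past : MeasurableSet[pastA tn] Dt := by
          have : Dt = ⋂ s : Fin n, {ω | s.val < t → A s ω = a s} := by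
            ext ω; simp [hDt_def, Set.mem_iInter]
          rw [this]
          refine MeasurableSet.iInter fun s => ?_
          by_cases hs : s.val < t
          · have heq : {ω : Ω | s.val < t → A s ω = a s} = (A s) ⁻¹' {a s} := by
              ext ω; simp [hs]
            rw [heq]
            exact hApastA tn s hs _ ⟨{a s}, measurableSet_singleton _, rfl⟩
          · have heq : {ω : Ω | s.val < t → A s ω = a s} = Set.univ := by
              ext ω; simp [hs]
            rw [heq]
            exact MeasurableSet.univ
        have hDl : ∀ ω ∈ Dt, hist tn ω
            = List.ofFn (fun i : Fin tn.val => a ⟨i.val, i.isLt.trans tn.isLt⟩) := by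
          intro ω hω
          rw [hhist]
          exact congrArg List.ofFn (funext fun i => hω ⟨i.val, i.isLt.trans tn.isLt⟩ i.isLt)
        have hfil : Finset.univ.filter (fun s : Fin n => s.val < t + 1)
            = insert tn (Finset.univ.filter (fun s : Fin n => s.val < t)) := by
          ext s
          simp only [Finset.mem_filter, Finset.mem_insert, Finset.mem_univ, true_and]
          constructor
          · intro h
            rcases Nat.lt_succ_iff_lt_or_eq.mp h with h' | h'
            · exact Or.inr h'
            · exact Or.inl (Fin.ext h')
          · rintro (h | h)
            · subst h; exact Nat.lt_succ_self t
            · exact Nat.lt_succ_of_lt h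
        have htn_nmem : tn ∉ Finset.univ.filter (fun s : Fin n => s.val < t) := by
          simp [Finset.mem_filter, htn_def]
        rw [hset, step0 tn Dt _ (a tn) hDt_past hDl,
          ih (le_of_lt (Nat.lt_of_succ_le ht)), hfil, Finset.prod_insert htn_nmem]
        ring
  -- full rectangles
  have rect1full : ∀ (B : Fin n → Set ℝ), (∀ s, MeasurableSet (B s)) →
      ∀ (a : Fin n → Fin d),
      (μ1 {ω | ∀ s : Fin n, U s ω ∈ B s ∧ A s ω = a s}).toReal
        = ∏ s : Fin n, ∫ u, (B s).indicator (fun u => κ u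
            (LM (List.ofFn (fun i : Fin s.val => a ⟨i.val, i.isLt.trans s.isLt⟩))) (a s)) u ∂lI := by
    intro B hB a
    have h1 : {ω : Ω | ∀ s : Fin n, U s ω ∈ B s ∧ A s ω = a s}
        = {ω | ∀ s : Fin n, s.val < n → (U s ω ∈ B s ∧ A s ω = a s)} := by
      ext ω
      exact ⟨fun h s _ => h s, fun h s => h s s.isLt⟩
    have h2 : Finset.univ.filter (fun s : Fin n => s.val < n) = Finset.univ := by
      ext s; simp [s.isLt]
    rw [h1, rect1 B hB a n le_rfl, h2]
  have rect0full : ∀ (a : Fin n → Fin d),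
      (μ0 {ω | ∀ s : Fin n, A s ω = a s}).toReal
        = ∏ s : Fin n,
            LM (List.ofFn (fun i : Fin s.val => a ⟨i.val, i.isLt.trans s.isLt⟩)) (a s) := by
    intro a
    have h1 : {ω : Ω | ∀ s : Fin n, A s ω = a s}
        = {ω | ∀ s : Fin n, s.val < n → A s ω = a s} := by
      ext ω
      exact ⟨fun h s _ => h s, fun h s => h s s.isLt⟩
    have h2 : Finset.univ.filter (fun s : Fin n => s.val < n) = Finset.univ := by
      ext s; simp [s.isLt]
    rw [h1, rect0 a n le_rfl, h2]
  -- measurability infrastructure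
  have havm : ∀ t : Fin n,
      Measurable (fun ω => (fun i : Fin t.val => A ⟨i.val, i.isLt.trans t.isLt⟩ ω)) :=
    fun t => measurable_pi_lambda _ (fun i => hA_meas _)
  have hLMhist_meas : ∀ t : Fin n, Measurable (fun ω => LM (hist t ω)) := by
    intro t
    have : (fun ω => LM (hist t ω))
        = (fun v : Fin t.val → Fin d => LM (List.ofFn v))
          ∘ (fun ω => (fun i : Fin t.val => A ⟨i.val, i.isLt.trans t.isLt⟩ ω)) := by
      funext ω
      simp only [Function.comp_apply]
      rw [hhist]
    rw [this]
    exact Measurable.of_discrete.comp (havm t)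
  have heval : ∀ (g : Ω → Fin d → ℝ) (t : Fin n), Measurable g →
      Measurable (fun ω => g ω (A t ω)) := by
    intro g t hg
    have : (fun ω => g ω (A t ω)) = fun ω => ∑ b, if A t ω = b then g ω b else 0 := by
      funext ω
      rw [Finset.sum_ite_eq]
      simp
    rw [this]
    exact Finset.measurable_sum _ (fun b _ => Measurable.ite
      ((hA_meas t) (measurableSet_singleton b)) ((measurable_pi_apply b).comp hg)
      measurable_const)
  -- the two densities
  set W : Ω → ℝ := fun ω => ∏ t : Fin n, LM (hist t ω) (A t ω) with hW_def
  set K : Ω → ℝ := fun ω => ∏ t : Fin n, κ (U t ω) (LM (hist t ω)) (A t ω) with hK_def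
  have hWf_meas : ∀ t : Fin n, Measurable (fun ω => LM (hist t ω) (A t ω)) :=
    fun t => heval _ t (hLMhist_meas t)
  have hKf_meas : ∀ t : Fin n, Measurable (fun ω => κ (U t ω) (LM (hist t ω)) (A t ω)) :=
    fun t => heval _ t (hκ_meas.comp ((hU_meas t).prodMk (hLMhist_meas t)))
  have hW_meas : Measurable W := Finset.measurable_prod _ (fun t _ => hWf_meas t)
  have hK_meas : Measurable K := Finset.measurable_prod _ (fun t _ => hKf_meas t)
  have hW_nonneg : ∀ ω, 0 ≤ W ω :=
    fun ω => Finset.prod_nonneg (fun t _ => hLM_nonneg _ _)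
  have hW_le1 : ∀ ω, W ω ≤ 1 :=
    fun ω => Finset.prod_le_one (fun t _ => hLM_nonneg _ _) (fun t _ => hLM_le1 _ _)
  have hK_nonneg : ∀ ω, 0 ≤ K ω :=
    fun ω => Finset.prod_nonneg (fun t _ => hκ_nonneg _ _ _)
  have hK_le1 : ∀ ω, K ω ≤ 1 :=
    fun ω => Finset.prod_le_one (fun t _ => hκ_nonneg _ _ _) (fun t _ => hκ_le1 _ _ _)
  have hW_int : Integrable W μ1 := wm_integrable_of_bdd (C := 1) hW_meas.aestronglyMeasurable
    (fun ω => abs_le.mpr ⟨by linarith [hW_nonneg ω], hW_le1 ω⟩)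
  have hK_int : Integrable K μ0 := wm_integrable_of_bdd (C := 1) hK_meas.aestronglyMeasurable
    (fun ω => abs_le.mpr ⟨by linarith [hK_nonneg ω], hK_le1 ω⟩)
  -- the π-system of rectangles
  set P : Set (Set Ω) := {S | ∃ (B : Fin n → Set ℝ) (a : Fin n → Fin d),
    (∀ s, MeasurableSet (B s)) ∧ S = {ω | ∀ s : Fin n, U s ω ∈ B s ∧ A s ω = a s}} with hP_def
  have hPi : IsPiSystem P := by
    rintro S ⟨B, a, hB, rfl⟩ S' ⟨B', a', hB', rfl⟩ hne
    obtain ⟨ω0, hω0, hω0'⟩ := hne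
    have haa : a = a' := by
      funext s
      rw [← (hω0 s).2, ← (hω0' s).2]
    subst haa
    refine ⟨fun s => B s ∩ B' s, a, fun s => (hB s).inter (hB' s), ?_⟩
    ext ω
    constructor
    · rintro ⟨h1, h2⟩ s
      exact ⟨⟨(h1 s).1, (h2 s).1⟩, (h1 s).2⟩
    · intro h
      exact ⟨fun s => ⟨(h s).1.1, (h s).2⟩, fun s => ⟨(h s).1.2, (h s).2⟩⟩
  -- rectangles are measurable and generate G
  have hG_le : (⨆ s : Fin n, (MeasurableSpace.comap (U s) inferInstance
      ⊔ MeasurableSpace.comap (A s) inferInstance)) ≤ m0 :=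
    iSup_le fun s => sup_le (hcU s) (hcA s)
  have hUG : ∀ s : Fin n, MeasurableSpace.comap (U s) inferInstance
      ≤ ⨆ s : Fin n, (MeasurableSpace.comap (U s) inferInstance
        ⊔ MeasurableSpace.comap (A s) inferInstance) :=
    fun s => le_iSup_of_le s le_sup_left
  have hAG : ∀ s : Fin n, MeasurableSpace.comap (A s) inferInstance
      ≤ ⨆ s : Fin n, (MeasurableSpace.comap (U s) inferInstance
        ⊔ MeasurableSpace.comap (A s) inferInstance) :=
    fun s => le_iSup_of_le s le_sup_right
  have hGen : (⨆ s : Fin n, (MeasurableSpace.comap (U s) inferInstance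
      ⊔ MeasurableSpace.comap (A s) inferInstance)) = MeasurableSpace.generateFrom P := by
    apply le_antisymm
    · refine iSup_le fun s => sup_le ?_ ?_
      · rintro E ⟨B, hBm, rfl⟩
        have : U s ⁻¹' B = ⋃ (a : Fin n → Fin d),
            {ω | ∀ s' : Fin n, U s' ω ∈ (fun s'' => if s'' = s then B else Set.univ) s'
              ∧ A s' ω = a s'} := by
          ext ω
          simp only [Set.mem_iUnion, Set.mem_preimage, Set.mem_setOf_eq]
          constructor
          · intro h
            exact ⟨fun s' => A s' ω, fun s' => ⟨by by_cases h' : s' = s <;> simp [h', h], rfl⟩⟩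
          · rintro ⟨a, ha⟩
            have := (ha s).1
            simpa using this
        rw [this]
        refine MeasurableSet.iUnion fun a => MeasurableSpace.measurableSet_generateFrom ?_
        exact ⟨fun s'' => if s'' = s then B else Set.univ, a,
          fun s'' => by by_cases h' : s'' = s <;> simp [h', hBm], rfl⟩
      · rintro E ⟨C, hCm, rfl⟩
        have : A s ⁻¹' C = ⋃ (a : {a : Fin n → Fin d // a s ∈ C}),
            {ω | ∀ s' : Fin n, U s' ω ∈ Set.univ ∧ A s' ω = a.val s'} := by
          ext ω
          simp only [Set.mem_iUnion, Set.mem_preimage, Set.mem_setOf_eq]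
          constructor
          · intro h
            exact ⟨⟨fun s' => A s' ω, h⟩, fun s' => ⟨Set.mem_univ _, rfl⟩⟩
          · rintro ⟨a, ha⟩
            rw [(ha s).2]
            exact a.property
        rw [this]
        refine MeasurableSet.iUnion fun a => MeasurableSpace.measurableSet_generateFrom ?_
        exact ⟨fun _ => Set.univ, a.val, fun _ => MeasurableSet.univ, rfl⟩
    · refine MeasurableSpace.generateFrom_le ?_
      rintro S ⟨B, a, hB, rfl⟩
      have : {ω : Ω | ∀ s : Fin n, U s ω ∈ B s ∧ A s ω = a s}
          = ⋂ s : Fin n, (U s ⁻¹' B s ∩ A s ⁻¹' {a s}) := by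
        ext ω
        simp only [Set.mem_iInter, Set.mem_inter_iff, Set.mem_preimage, Set.mem_singleton_iff,
          Set.mem_setOf_eq]
      rw [this]
      exact MeasurableSet.iInter fun s => MeasurableSet.inter
        (hUG s _ ⟨B s, hB s, rfl⟩) (hAG s _ ⟨{a s}, measurableSet_singleton _, rfl⟩)
  -- the key equality on basic rectangles
  have hbasic : ∀ S ∈ P, ∫ ω in S, W ω ∂μ1 = ∫ ω in S, K ω ∂μ0 := by
    rintro S ⟨B, a, hB, rfl⟩
    set R : Set Ω := {ω | ∀ s : Fin n, U s ω ∈ B s ∧ A s ω = a s} with hR_def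
    have hRm0 : MeasurableSet[m0] R := by
      have : R = ⋂ s : Fin n, (U s ⁻¹' B s ∩ A s ⁻¹' {a s}) := by
        ext ω
        simp only [hR_def, Set.mem_iInter, Set.mem_inter_iff, Set.mem_preimage,
          Set.mem_singleton_iff, Set.mem_setOf_eq]
      rw [this]
      exact MeasurableSet.iInter fun s =>
        ((hU_meas s) (hB s)).inter ((hA_meas s) (measurableSet_singleton _))
    have hhist_on : ∀ ω ∈ R, ∀ t : Fin n, hist t ω
        = List.ofFn (fun i : Fin t.val => a ⟨i.val, i.isLt.trans t.isLt⟩) := by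
      intro ω hω t
      rw [hhist]
      exact congrArg List.ofFn (funext fun i => (hω ⟨i.val, i.isLt.trans t.isLt⟩).2)
    -- LHS
    have hLHS : ∫ ω in R, W ω ∂μ1
        = (∏ s : Fin n, ∫ u, (B s).indicator (fun u => κ u
            (LM (List.ofFn (fun i : Fin s.val => a ⟨i.val, i.isLt.trans s.isLt⟩))) (a s)) u ∂lI)
          * ∏ s : Fin n,
              LM (List.ofFn (fun i : Fin s.val => a ⟨i.val, i.isLt.trans s.isLt⟩)) (a s) := by
      have hWconst : ∀ ω ∈ R, W ω = ∏ s : Fin n,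
          LM (List.ofFn (fun i : Fin s.val => a ⟨i.val, i.isLt.trans s.isLt⟩)) (a s) := by
        intro ω hω
        exact Finset.prod_congr rfl fun t _ => by rw [hhist_on ω hω t, (hω t).2]
      rw [setIntegral_congr_fun hRm0 hWconst, setIntegral_const, measureReal_def, smul_eq_mul, rect1full B hB a]
    -- RHS
    have hptwise : R.indicator K = fun ω =>
        ((({a} : Set (Fin n → Fin d)).indicator (fun _ => (1:ℝ)) (fun s => A s ω)) *
          ∏ s : Fin n, (B s).indicator (fun u => κ u
            (LM (List.ofFn (fun i : Fin s.val => a ⟨i.val, i.isLt.trans s.isLt⟩))) (a s))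
            (U s ω)) := by
      funext ω
      by_cases hA : (fun s => A s ω) = a
      · have hAs : ∀ s, A s ω = a s := fun s => congrFun hA s
        rw [Set.indicator_of_mem (Set.mem_singleton_iff.mpr hA), one_mul]
        by_cases hU : ∀ s, U s ω ∈ B s
        · have hωR : ω ∈ R := fun s => ⟨hU s, hAs s⟩
          rw [Set.indicator_of_mem hωR]
          exact Finset.prod_congr rfl fun s _ => by
            rw [Set.indicator_of_mem (hU s), hhist_on ω hωR s, hAs s]
        · push_neg at hU
          obtain ⟨s0, hs0⟩ := hU
          have hωR : ω ∉ R := fun hωR => hs0 (hωR s0).1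
          rw [Set.indicator_of_notMem hωR,
            Finset.prod_eq_zero (Finset.mem_univ s0) (Set.indicator_of_notMem hs0 _)]
      · have hωR : ω ∉ R := fun hωR => hA (funext fun s => (hωR s).2)
        rw [Set.indicator_of_notMem hωR,
          Set.indicator_of_notMem (fun hm => hA (Set.mem_singleton_iff.mp hm)), zero_mul]
    have hFfin_meas : Measurable (({a} : Set (Fin n → Fin d)).indicator (fun _ => (1:ℝ))) :=
      Measurable.of_discrete
    have hg_meas : ∀ s : Fin n, Measurable ((B s).indicator (fun u => κ u
        (LM (List.ofFn (fun i : Fin s.val => a ⟨i.val, i.isLt.trans s.isLt⟩))) (a s))) :=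
      fun s => (hκu_meas _ _).indicator (hB s)
    have hGpr_meas : Measurable (fun v : Fin n → ℝ => ∏ s : Fin n,
        (B s).indicator (fun u => κ u
          (LM (List.ofFn (fun i : Fin s.val => a ⟨i.val, i.isLt.trans s.isLt⟩))) (a s)) (v s)) :=
      Finset.measurable_prod _ (fun s _ => (hg_meas s).comp (measurable_pi_apply s))
    have hindep : IndepFun
        (fun ω => ({a} : Set (Fin n → Fin d)).indicator (fun _ => (1:ℝ)) (fun s => A s ω))
        (fun ω => ∏ s : Fin n, (B s).indicator (fun u => κ u
          (LM (List.ofFn (fun i : Fin s.val => a ⟨i.val, i.isLt.trans s.isLt⟩))) (a s))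
          (U s ω)) μ0 :=
      h0_indep.symm.comp hFfin_meas hGpr_meas
    have hind_bd : ∀ ω,
        |({a} : Set (Fin n → Fin d)).indicator (fun _ => (1:ℝ)) (fun s => A s ω)| ≤ 1 := by
      intro ω
      by_cases h : (fun s => A s ω) ∈ ({a} : Set (Fin n → Fin d))
      · rw [Set.indicator_of_mem h]; simp
      · rw [Set.indicator_of_notMem h]; simp
    have hprod_bd : ∀ ω, |∏ s : Fin n, (B s).indicator (fun u => κ u
        (LM (List.ofFn (fun i : Fin s.val => a ⟨i.val, i.isLt.trans s.isLt⟩))) (a s))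
        (U s ω)| ≤ 1 := by
      intro ω
      rw [abs_of_nonneg (Finset.prod_nonneg fun s _ =>
        Set.indicator_nonneg (fun u _ => hκ_nonneg _ _ _) _)]
      exact Finset.prod_le_one
        (fun s _ => Set.indicator_nonneg (fun u _ => hκ_nonneg _ _ _) _)
        (fun s _ => Set.indicator_le' (fun u _ => hκ_le1 _ _ _) (fun u _ => zero_le_one) _)
    have hint1 : Integrable
        (fun ω => ({a} : Set (Fin n → Fin d)).indicator (fun _ => (1:ℝ)) (fun s => A s ω)) μ0 :=
      wm_integrable_of_bdd (C := 1)
        ((hFfin_meas.comp (measurable_pi_lambda _ hA_meas)).aestronglyMeasurable) hind_bd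
    have hint2 : Integrable (fun ω => ∏ s : Fin n, (B s).indicator (fun u => κ u
        (LM (List.ofFn (fun i : Fin s.val => a ⟨i.val, i.isLt.trans s.isLt⟩))) (a s))
        (U s ω)) μ0 :=
      wm_integrable_of_bdd (C := 1)
        ((hGpr_meas.comp (measurable_pi_lambda _ hU_meas)).aestronglyMeasurable) hprod_bd
    have hRHS1 : ∫ ω in R, K ω ∂μ0
        = (∫ ω, ({a} : Set (Fin n → Fin d)).indicator (fun _ => (1:ℝ)) (fun s => A s ω) ∂μ0) *
          ∫ ω, (∏ s : Fin n, (B s).indicator (fun u => κ u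
            (LM (List.ofFn (fun i : Fin s.val => a ⟨i.val, i.isLt.trans s.isLt⟩))) (a s))
            (U s ω)) ∂μ0 := by
      rw [← integral_indicator hRm0, hptwise]
      exact hindep.integral_fun_mul_eq_mul_integral hint1.1 hint2.1
    have hRHS2 : ∫ ω, ({a} : Set (Fin n → Fin d)).indicator (fun _ => (1:ℝ))
          (fun s => A s ω) ∂μ0
        = ∏ s : Fin n,
            LM (List.ofFn (fun i : Fin s.val => a ⟨i.val, i.isLt.trans s.isLt⟩)) (a s) := by
      have hAA : MeasurableSet[m0] {ω : Ω | ∀ s : Fin n, A s ω = a s} := by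
        have : {ω : Ω | ∀ s : Fin n, A s ω = a s} = ⋂ s : Fin n, A s ⁻¹' {a s} := by
          ext ω
          simp [Set.mem_iInter]
        rw [this]
        exact MeasurableSet.iInter fun s => (hA_meas s) (measurableSet_singleton _)
      have heq : (fun ω => ({a} : Set (Fin n → Fin d)).indicator (fun _ => (1:ℝ))
          (fun s => A s ω))
          = Set.indicator {ω : Ω | ∀ s : Fin n, A s ω = a s} (fun _ => (1:ℝ)) := by
        funext ω
        by_cases h : (fun s => A s ω) = a
        · rw [Set.indicator_of_mem (Set.mem_singleton_iff.mpr h),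
            Set.indicator_of_mem (show ω ∈ {ω : Ω | ∀ s : Fin n, A s ω = a s}
              from fun s => congrFun h s)]
        · rw [Set.indicator_of_notMem (fun hm => h (Set.mem_singleton_iff.mp hm)),
            Set.indicator_of_notMem (show ω ∉ {ω : Ω | ∀ s : Fin n, A s ω = a s}
              from fun hm => h (funext fun s => hm s))]
      rw [heq, integral_indicator hAA, setIntegral_const, measureReal_def, smul_eq_mul, mul_one, rect0full a]
    have hY_iid : iIndepFun
        (fun s : Fin n => ((B s).indicator (fun u => κ u
          (LM (List.ofFn (fun i : Fin s.val => a ⟨i.val, i.isLt.trans s.isLt⟩))) (a s)))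
          ∘ (U s)) μ0 :=
      h0U_indep.comp _ (fun s => hg_meas s)
    have hY_int : ∀ s : Fin n, Integrable (((B s).indicator (fun u => κ u
        (LM (List.ofFn (fun i : Fin s.val => a ⟨i.val, i.isLt.trans s.isLt⟩))) (a s)))
        ∘ (U s)) μ0 := by
      intro s
      refine wm_integrable_of_bdd (C := 1)
        ((hg_meas s).comp (hU_meas s)).aestronglyMeasurable (fun ω => ?_)
      simp only [Function.comp_apply]
      rw [abs_of_nonneg (Set.indicator_nonneg (fun u _ => hκ_nonneg _ _ _) _)]
      exact Set.indicator_le' (fun u _ => hκ_le1 _ _ _) (fun u _ => zero_le_one) _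
    have hRHS3 : ∫ ω, (∏ s : Fin n, (B s).indicator (fun u => κ u
          (LM (List.ofFn (fun i : Fin s.val => a ⟨i.val, i.isLt.trans s.isLt⟩))) (a s))
          (U s ω)) ∂μ0
        = ∏ s : Fin n, ∫ u, (B s).indicator (fun u => κ u
            (LM (List.ofFn (fun i : Fin s.val => a ⟨i.val, i.isLt.trans s.isLt⟩))) (a s)) u ∂lI := by
      have := (wm_integral_prod_iid hY_iid
        (fun s => (hg_meas s).comp (hU_meas s)) hY_int Finset.univ).2
      simp only [Function.comp_apply] at this
      rw [this]
      refine Finset.prod_congr rfl fun s _ => ?_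
      rw [← h0U_unif s]
      exact (integral_map (hU_meas s).aemeasurable (hg_meas s).aestronglyMeasurable).symm
    rw [hLHS, hRHS1, hRHS2, hRHS3]
    ring
  -- total masses agree
  have htot : ∫ ω, W ω ∂μ1 = ∫ ω, K ω ∂μ0 := by
    have hV : Measurable (fun ω => (fun s => A s ω) : Ω → (Fin n → Fin d)) :=
      measurable_pi_lambda _ hA_meas
    rw [wm_integral_eq_sum_fiber hV W hW_int, wm_integral_eq_sum_fiber hV K hK_int]
    refine Finset.sum_congr rfl fun a _ => ?_
    have hfib : (fun ω => (fun s => A s ω) : Ω → (Fin n → Fin d)) ⁻¹' {a}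
        = {ω | ∀ s : Fin n, U s ω ∈ (fun _ : Fin n => (Set.univ : Set ℝ)) s ∧ A s ω = a s} := by
      ext ω
      simp only [Set.mem_preimage, Set.mem_singleton_iff, Set.mem_setOf_eq, Set.mem_univ,
        true_and]
      exact ⟨fun h s => congrFun h s, fun h => funext h⟩
    rw [hfib]
    exact hbasic _ ⟨fun _ => Set.univ, a, fun _ => MeasurableSet.univ, rfl⟩
  -- the key identity on all of G
  have key : ∀ S : Set Ω, MeasurableSet[⨆ s : Fin n,
        (MeasurableSpace.comap (U s) inferInstance
          ⊔ MeasurableSpace.comap (A s) inferInstance)] S →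
      ∫ ω in S, W ω ∂μ1 = ∫ ω in S, K ω ∂μ0 := by
    intro S hS
    refine @MeasurableSpace.induction_on_inter Ω
      (⨆ s : Fin n, (MeasurableSpace.comap (U s) inferInstance
        ⊔ MeasurableSpace.comap (A s) inferInstance))
      (fun S _ => ∫ ω in S, W ω ∂μ1 = ∫ ω in S, K ω ∂μ0) P hGen hPi (by simp) hbasic
      ?_ ?_ S hS
    · intro t htG hC
      have htm0 : MeasurableSet t := hG_le t htG
      have h1 := integral_add_compl htm0 hW_int
      have h2 := integral_add_compl htm0 hK_int
      linarith [htot]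
    · intro f hdisj hfG hC
      have hfm0 : ∀ i, MeasurableSet (f i) := fun i => hG_le _ (hfG i)
      rw [integral_iUnion hfm0 hdisj hW_int.integrableOn,
        integral_iUnion hfm0 hdisj hK_int.integrableOn]
      exact tsum_congr hC
  -- entropy computations
  have hnml_meas : Measurable Real.negMulLog := by
    unfold Real.negMulLog
    exact measurable_id.neg.mul Real.measurable_log
  have hDv_past : ∀ (t : Fin n) (v : Fin t.val → Fin d),
      MeasurableSet[past t]
        {ω | (fun i : Fin t.val => A ⟨i.val, i.isLt.trans t.isLt⟩ ω) = v} := by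
    intro t v
    have : {ω | (fun i : Fin t.val => A ⟨i.val, i.isLt.trans t.isLt⟩ ω) = v}
        = ⋂ i : Fin t.val, (A ⟨i.val, i.isLt.trans t.isLt⟩) ⁻¹' {v i} := by
      ext ω
      simp [Set.mem_iInter, funext_iff]
    rw [this]
    exact MeasurableSet.iInter fun i =>
      hApast t ⟨i.val, i.isLt.trans t.isLt⟩ i.isLt _ ⟨{v i}, measurableSet_singleton _, rfl⟩
  have hDv_m0 : ∀ (t : Fin n) (v : Fin t.val → Fin d),
      MeasurableSet[m0] {ω | (fun i : Fin t.val => A ⟨i.val, i.isLt.trans t.isLt⟩ ω) = v} :=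
    fun t v => hpast_le t _ (hDv_past t v)
  have hDv_hist : ∀ (t : Fin n) (v : Fin t.val → Fin d),
      ∀ ω ∈ {ω | (fun i : Fin t.val => A ⟨i.val, i.isLt.trans t.isLt⟩ ω) = v},
        hist t ω = List.ofFn v := by
    intro t v ω hω
    rw [hhist]
    exact congrArg List.ofFn hω
  have hfiber : ∀ (t : Fin n) (v : Fin t.val → Fin d) (b : Fin d),
      (μ1 ({ω | (fun i : Fin t.val => A ⟨i.val, i.isLt.trans t.isLt⟩ ω) = v}
          ∩ A t ⁻¹' {b})).toReal
        = (μ1 {ω | (fun i : Fin t.val => A ⟨i.val, i.isLt.trans t.isLt⟩ ω) = v}).toReal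
          * LM (List.ofFn v) b := by
    intro t v b
    have h := step1 t _ (List.ofFn v) Set.univ b (hDv_past t v) (hDv_hist t v)
      MeasurableSet.univ
    rw [Set.preimage_univ, Set.univ_inter, Set.indicator_univ, hκ_int] at h
    exact h
  -- per-step entropy identity
  have perT : ∀ t : Fin n, ∫ ω, -Real.log (LM (hist t ω) (A t ω)) ∂μ1
      = ∫ ω, ∑ b, Real.negMulLog (LM (hist t ω) b) ∂μ1 := by
    intro t
    have hVt : Measurable (fun ω =>
        ((fun i : Fin t.val => A ⟨i.val, i.isLt.trans t.isLt⟩ ω, A t ω)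
          : (Fin t.val → Fin d) × Fin d)) := (havm t).prodMk (hA_meas t)
    have hf1_meas : Measurable (fun ω => -Real.log (LM (hist t ω) (A t ω))) :=
      (Real.measurable_log.comp (hWf_meas t)).neg
    have hf1_bd : ∀ ω, |(-Real.log (LM (hist t ω) (A t ω)))|
        ≤ ∑ q : (Fin t.val → Fin d) × Fin d, |Real.log (LM (List.ofFn q.1) q.2)| := by
      intro ω
      rw [abs_neg]
      have heq : Real.log (LM (hist t ω) (A t ω))
          = Real.log (LM (List.ofFn (fun i : Fin t.val => A ⟨i.val, i.isLt.trans t.isLt⟩ ω))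
            (A t ω)) := by rw [hhist]
      rw [heq]
      exact Finset.single_le_sum
        (f := fun q : (Fin t.val → Fin d) × Fin d => |Real.log (LM (List.ofFn q.1) q.2)|)
        (fun q _ => abs_nonneg _)
        (Finset.mem_univ ((fun i : Fin t.val => A ⟨i.val, i.isLt.trans t.isLt⟩ ω), A t ω))
    have hf1_int : Integrable (fun ω => -Real.log (LM (hist t ω) (A t ω))) μ1 :=
      wm_integrable_of_bdd hf1_meas.aestronglyMeasurable hf1_bd
    have hf2_meas : Measurable (fun ω => ∑ b, Real.negMulLog (LM (hist t ω) b)) :=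
      Finset.measurable_sum _ (fun b _ =>
        hnml_meas.comp ((measurable_pi_apply b).comp (hLMhist_meas t)))
    have hf2_bd : ∀ ω, |∑ b, Real.negMulLog (LM (hist t ω) b)|
        ≤ ∑ v : Fin t.val → Fin d, |∑ b, Real.negMulLog (LM (List.ofFn v) b)| := by
      intro ω
      have heq : |∑ b, Real.negMulLog (LM (hist t ω) b)|
          = |∑ b, Real.negMulLog (LM (List.ofFn
              (fun i : Fin t.val => A ⟨i.val, i.isLt.trans t.isLt⟩ ω)) b)| := by rw [hhist]
      rw [heq]
      exact Finset.single_le_sum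
        (f := fun v : Fin t.val → Fin d => |∑ b, Real.negMulLog (LM (List.ofFn v) b)|)
        (fun v _ => abs_nonneg _)
        (Finset.mem_univ (fun i : Fin t.val => A ⟨i.val, i.isLt.trans t.isLt⟩ ω))
    have hf2_int : Integrable (fun ω => ∑ b, Real.negMulLog (LM (hist t ω) b)) μ1 :=
      wm_integrable_of_bdd hf2_meas.aestronglyMeasurable hf2_bd
    -- fiber decomposition of both sides
    rw [wm_integral_eq_sum_fiber hVt _ hf1_int, wm_integral_eq_sum_fiber (havm t) _ hf2_int]
    rw [Fintype.sum_prod_type]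
    refine Finset.sum_congr rfl fun v _ => ?_
    -- right side fiber
    have hR : ∫ ω in (fun ω => (fun i : Fin t.val => A ⟨i.val, i.isLt.trans t.isLt⟩ ω)) ⁻¹' {v},
        (∑ b, Real.negMulLog (LM (hist t ω) b)) ∂μ1
        = (μ1 {ω | (fun i : Fin t.val => A ⟨i.val, i.isLt.trans t.isLt⟩ ω) = v}).toReal
          * ∑ b, Real.negMulLog (LM (List.ofFn v) b) := by
      have hpre : (fun ω => (fun i : Fin t.val => A ⟨i.val, i.isLt.trans t.isLt⟩ ω)) ⁻¹' {v}
          = {ω | (fun i : Fin t.val => A ⟨i.val, i.isLt.trans t.isLt⟩ ω) = v} := rfl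
      rw [hpre, setIntegral_congr_fun (hDv_m0 t v)
        (g := fun _ => ∑ b, Real.negMulLog (LM (List.ofFn v) b))
        (fun ω hω => by rw [hDv_hist t v ω hω]), setIntegral_const, measureReal_def, smul_eq_mul]
    rw [hR]
    -- left side fibers
    have hL : ∀ b : Fin d, ∫ ω in (fun ω =>
        ((fun i : Fin t.val => A ⟨i.val, i.isLt.trans t.isLt⟩ ω, A t ω)
          : (Fin t.val → Fin d) × Fin d)) ⁻¹' {(v, b)},
        -Real.log (LM (hist t ω) (A t ω)) ∂μ1
        = (μ1 {ω | (fun i : Fin t.val => A ⟨i.val, i.isLt.trans t.isLt⟩ ω) = v}).toReal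
          * Real.negMulLog (LM (List.ofFn v) b) := by
      intro b
      have hpre : (fun ω =>
          ((fun i : Fin t.val => A ⟨i.val, i.isLt.trans t.isLt⟩ ω, A t ω)
            : (Fin t.val → Fin d) × Fin d)) ⁻¹' {(v, b)}
          = {ω | (fun i : Fin t.val => A ⟨i.val, i.isLt.trans t.isLt⟩ ω) = v}
            ∩ A t ⁻¹' {b} := by
        ext ω
        simp only [Set.mem_preimage, Set.mem_singleton_iff, Prod.mk.injEq,
          Set.mem_inter_iff, Set.mem_setOf_eq]
      have hmem : MeasurableSet[m0]
          ({ω | (fun i : Fin t.val => A ⟨i.val, i.isLt.trans t.isLt⟩ ω) = v}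
            ∩ A t ⁻¹' {b}) :=
        (hDv_m0 t v).inter ((hA_meas t) (measurableSet_singleton b))
      rw [hpre, setIntegral_congr_fun hmem
        (g := fun _ => -Real.log (LM (List.ofFn v) b))
        (fun ω hω => by rw [hDv_hist t v ω hω.1, hω.2]), setIntegral_const, measureReal_def, smul_eq_mul,
        hfiber t v b]
      unfold Real.negMulLog
      ring
    rw [Finset.sum_congr rfl (fun b _ => hL b), ← Finset.mul_sum]
  -- global integrability of the entropy integrands
  have hf1_int : ∀ t : Fin n,
      Integrable (fun ω => -Real.log (LM (hist t ω) (A t ω))) μ1 := by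
    intro t
    refine wm_integrable_of_bdd
      (C := ∑ q : (Fin t.val → Fin d) × Fin d, |Real.log (LM (List.ofFn q.1) q.2)|)
      ((Real.measurable_log.comp (hWf_meas t)).neg |>.aestronglyMeasurable) (fun ω => ?_)
    rw [abs_neg]
    have heq : Real.log (LM (hist t ω) (A t ω))
        = Real.log (LM (List.ofFn (fun i : Fin t.val => A ⟨i.val, i.isLt.trans t.isLt⟩ ω))
          (A t ω)) := by rw [hhist]
    rw [heq]
    exact Finset.single_le_sum
      (f := fun q : (Fin t.val → Fin d) × Fin d => |Real.log (LM (List.ofFn q.1) q.2)|)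
      (fun q _ => abs_nonneg _)
      (Finset.mem_univ ((fun i : Fin t.val => A ⟨i.val, i.isLt.trans t.isLt⟩ ω), A t ω))
  have hf2_int : ∀ t : Fin n,
      Integrable (fun ω => ∑ b, Real.negMulLog (LM (hist t ω) b)) μ1 := by
    intro t
    refine wm_integrable_of_bdd
      (C := ∑ v : Fin t.val → Fin d, |∑ b, Real.negMulLog (LM (List.ofFn v) b)|)
      ((Finset.measurable_sum _ (fun b _ =>
        hnml_meas.comp ((measurable_pi_apply b).comp (hLMhist_meas t))))
        |>.aestronglyMeasurable) (fun ω => ?_)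
    have heq : |∑ b, Real.negMulLog (LM (hist t ω) b)|
        = |∑ b, Real.negMulLog (LM (List.ofFn
            (fun i : Fin t.val => A ⟨i.val, i.isLt.trans t.isLt⟩ ω)) b)| := by rw [hhist]
    rw [heq]
    exact Finset.single_le_sum
      (f := fun v : Fin t.val → Fin d => |∑ b, Real.negMulLog (LM (List.ofFn v) b)|)
      (fun v _ => abs_nonneg _)
      (Finset.mem_univ (fun i : Fin t.val => A ⟨i.val, i.isLt.trans t.isLt⟩ ω))
  -- the vanishing set is μ1-null
  have hnull : μ1 {ω | ∃ t : Fin n, LM (hist t ω) (A t ω) = 0} = 0 := by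
    have hsub : {ω | ∃ t : Fin n, LM (hist t ω) (A t ω) = 0}
        ⊆ ⋃ t : Fin n, ⋃ q : (Fin t.val → Fin d) × Fin d,
          (if LM (List.ofFn q.1) q.2 = 0 then
            ({ω | (fun i : Fin t.val => A ⟨i.val, i.isLt.trans t.isLt⟩ ω) = q.1}
              ∩ A t ⁻¹' {q.2}) else ∅) := by
      rintro ω ⟨t, ht⟩
      refine Set.mem_iUnion.mpr ⟨t, Set.mem_iUnion.mpr
        ⟨((fun i : Fin t.val => A ⟨i.val, i.isLt.trans t.isLt⟩ ω), A t ω), ?_⟩⟩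
      rw [if_pos (show LM (List.ofFn (fun i : Fin t.val => A ⟨i.val, i.isLt.trans t.isLt⟩ ω))
        (A t ω) = 0 by rw [← hhist]; exact ht)]
      exact ⟨rfl, rfl⟩
    refine measure_mono_null hsub ?_
    refine measure_iUnion_null fun t => measure_iUnion_null fun q => ?_
    by_cases h : LM (List.ofFn q.1) q.2 = 0
    · rw [if_pos h]
      have hz := hfiber t q.1 q.2
      rw [h, mul_zero] at hz
      have := (ENNReal.toReal_eq_zero_iff _).mp hz
      exact this.resolve_right (measure_ne_top μ1 _)
    · rw [if_neg h]
      exact measure_empty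
  -- the test event
  set E : Set Ω := {ω | T ω = true} with hE_def
  have hE_G : MeasurableSet[⨆ s : Fin n,
      (MeasurableSpace.comap (U s) inferInstance
        ⊔ MeasurableSpace.comap (A s) inferInstance)] E :=
    hT_meas (measurableSet_singleton true)
  have hE_m0 : MeasurableSet[m0] E := hG_le _ hE_G
  have hWKE : ∫ ω in E, W ω ∂μ1 = ∫ ω in E, K ω ∂μ0 := key E hE_G
  have hKleδ : ∫ ω in E, K ω ∂μ0 ≤ δ := by
    have h1 : ∫ ω in E, K ω ∂μ0 ≤ ∫ ω in E, (1:ℝ) ∂μ0 :=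
      setIntegral_mono_on hK_int.integrableOn (integrable_const _).integrableOn hE_m0
        (fun ω _ => hK_le1 ω)
    rw [setIntegral_const, measureReal_def, smul_eq_mul, mul_one] at h1
    have hcompl : Eᶜ = {ω | T ω = false} := by
      ext ω
      simp [hE_def, Bool.not_eq_true]
    have hsum : (μ0 E).toReal + (μ0 Eᶜ).toReal = 1 := by
      rw [← ENNReal.toReal_add (measure_ne_top _ _) (measure_ne_top _ _),
        measure_add_measure_compl hE_m0]
      simp
    have h2 : 1 - δ ≤ (μ0 Eᶜ).toReal := by
      have := ENNReal.toReal_mono (measure_ne_top μ0 _) (hcompl ▸ hT0)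
      rwa [ENNReal.toReal_ofReal (by linarith)] at this
    linarith
  have hμ1E : 1 - δ ≤ (μ1 E).toReal := by
    have := ENNReal.toReal_mono (measure_ne_top μ1 _) hT1
    rwa [ENNReal.toReal_ofReal (by linarith)] at this
  -- Z, the log-likelihood-type quantity
  set Z : Ω → ℝ := fun ω => ∑ t : Fin n, -Real.log (LM (hist t ω) (A t ω)) with hZ_def
  have hZ_nonneg : ∀ ω, 0 ≤ Z ω := by
    intro ω
    refine Finset.sum_nonneg fun t _ => ?_
    rw [neg_nonneg]
    exact Real.log_nonpos (hLM_nonneg _ _) (hLM_le1 _ _)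
  have hZ_int : Integrable Z μ1 := integrable_finset_sum _ (fun t _ => hf1_int t)
  have hgoal_eq : ∫ ω, ∑ t, ∑ b, Real.negMulLog (LM (hist t ω) b) ∂μ1
      = ∫ ω, Z ω ∂μ1 := by
    rw [integral_finset_sum _ (fun t _ => hf2_int t), hZ_def,
      integral_finset_sum _ (fun t _ => hf1_int t)]
    exact (Finset.sum_congr rfl fun t _ => (perT t).symm)
  -- the constant c
  have h1δ : (0:ℝ) < 1 - δ := by linarith
  set c : ℝ := δ / (1 - δ) with hc_def
  have hc0 : 0 < c := div_pos hδ0 h1δ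
  have hc1 : c < 1 := by
    rw [hc_def, div_lt_one h1δ]
    linarith
  have hlogc : Real.log c ≤ 0 := Real.log_nonpos hc0.le hc1.le
  -- the pointwise inequality
  have hptZ : ∀ ω, ω ∉ {ω | ∃ t : Fin n, LM (hist t ω) (A t ω) = 0} →
      ((1 - Real.log c) - W ω / c) ≤ Z ω := by
    intro ω hωN
    have hpos : ∀ t : Fin n, 0 < LM (hist t ω) (A t ω) := by
      intro t
      rcases lt_or_eq_of_le (hLM_nonneg (hist t ω) (A t ω)) with h | h
      · exact h
      · exact absurd ⟨t, h.symm⟩ hωN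
    have hWpos : 0 < W ω := Finset.prod_pos fun t _ => hpos t
    have hZW : Z ω = -Real.log (W ω) := by
      rw [hZ_def, hW_def]
      rw [Real.log_prod (fun t _ => (hpos t).ne')]
      simp
    have hlog := Real.log_le_sub_one_of_pos (div_pos hWpos hc0)
    rw [Real.log_div hWpos.ne' hc0.ne'] at hlog
    rw [hZW]
    linarith
  -- assemble
  have hZE : ∫ ω in E, Z ω ∂μ1 ≤ ∫ ω, Z ω ∂μ1 :=
    setIntegral_le_integral hZ_int (Filter.Eventually.of_forall hZ_nonneg)
  have hlow : ((1 - Real.log c) * (μ1 E).toReal - (1/c) * ∫ ω in E, W ω ∂μ1)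
      ≤ ∫ ω in E, Z ω ∂μ1 := by
    have h0 : ∀ᵐ ω ∂μ1, ω ∉ {ω | ∃ t : Fin n, LM (hist t ω) (A t ω) = 0} := by
      rw [ae_iff]
      convert hnull using 2
      ext ω
      simp
    have h0' := ae_restrict_of_ae (s := E) h0
    have hae : ∀ᵐ ω ∂(μ1.restrict E), ((1 - Real.log c) - W ω / c) ≤ Z ω := by
      filter_upwards [h0'] with ω h1
      exact hptZ ω h1
    have hint_lhs : Integrable (fun ω => (1 - Real.log c) - W ω / c) (μ1.restrict E) :=
      (integrable_const _).sub (hW_int.restrict.div_const c)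
    calc (1 - Real.log c) * (μ1 E).toReal - (1/c) * ∫ ω in E, W ω ∂μ1
        = ∫ ω in E, ((1 - Real.log c) - W ω / c) ∂μ1 := by
          rw [integral_sub (integrable_const _) (hW_int.restrict.div_const c),
            setIntegral_const, measureReal_def, smul_eq_mul, integral_div]
          ring
      _ ≤ ∫ ω in E, Z ω ∂μ1 := setIntegral_mono_ae_restrict hint_lhs hZ_int.restrict hae
  have hWEle : ∫ ω in E, W ω ∂μ1 ≤ δ := by
    rw [hWKE]
    exact hKleδ
  have hfinal : (1-δ) * (Real.log (1-δ) - Real.log δ) ≤ ∫ ω, Z ω ∂μ1 := by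
    have h1c : 0 ≤ 1 - Real.log c := by linarith
    have hm1 : (1 - Real.log c) * (1-δ) ≤ (1 - Real.log c) * (μ1 E).toReal :=
      mul_le_mul_of_nonneg_left hμ1E h1c
    have hm2 : (1/c) * ∫ ω in E, W ω ∂μ1 ≤ (1/c) * δ :=
      mul_le_mul_of_nonneg_left hWEle (by positivity)
    have hcval : Real.log c = Real.log δ - Real.log (1-δ) := by
      rw [hc_def, Real.log_div hδ0.ne' h1δ.ne']
    have hccalc : (1 - Real.log c) * (1-δ) - (1/c) * δ
        = (1-δ) * (Real.log (1-δ) - Real.log δ) := by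
      rw [hcval, hc_def]
      field_simp
      ring
    linarith
  calc Real.log (1/(4*δ)) ≤ (1-δ) * (Real.log (1-δ) - Real.log δ) := wm_numeric hδ0 hδ4
    _ ≤ ∫ ω, Z ω ∂μ1 := hfinal
    _ = ∫ ω, ∑ t, ∑ b, Real.negMulLog (LM (hist t ω) b) ∂μ1 := hgoal_eq.symm
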